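/- For real λ, μ with λ + μ ≠ 0 and integer p ≥ 1, with C_n(λ) := (λ)_n/n! (C_n = 0 for n < 0), the following determinant identity holds: C_p(λ+μ) · μ·( C_{p−1}(λ+μ+2) + μ·C_{p−2}(λ+μ+2) ) − ( μ·C_{p−1}(λ+μ+1) )² = (λμ/(λ+μ)) · C_p(λ+μ) · C_{p−1}(λ+μ+2). -/

import Mathlib

/-- Pochhammer coefficient C_n(x) = (x)_n / n!, zero for negative index. -/
noncomputable def pochC (n : ℤ) (x : ℝ) : ℝ :=
  if 0 ≤ n then (ascPochhammer ℝ n.toNat).eval x / (Nat.factorial n.toNat) else 0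

lemma pochC_natCast (n : ℕ) (x : ℝ) :
    pochC n x = (ascPochhammer ℝ n).eval x / (Nat.factorial n) := by
  simp [pochC]

lemma asc_succ_left_eval (n : ℕ) (x : ℝ) :
    (ascPochhammer ℝ (n + 1)).eval x = x * (ascPochhammer ℝ n).eval (x + 1) := by
  rw [ascPochhammer_succ_left]
  simp [Polynomial.eval_comp]

theorem stmt12 (lam mu : ℝ) (hlm : lam + mu ≠ 0) (p : ℕ) (hp : 1 ≤ p) :
    pochC p (lam + mu) *
        (mu * (pochC ((p : ℤ) - 1) (lam + mu + 2) + mu * pochC ((p : ℤ) - 2) (lam + mu + 2))) -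
      (mu * pochC ((p : ℤ) - 1) (lam + mu + 1)) ^ 2 =
    (lam * mu / (lam + mu)) * pochC p (lam + mu) * pochC ((p : ℤ) - 1) (lam + mu + 2) := by
  rcases p with _ | _ | k
  · omega
  · -- p = 1
    have h0 : ((1 : ℕ) : ℤ) - 1 = ((0 : ℕ) : ℤ) := by norm_num
    have hneg : ¬ (0 : ℤ) ≤ ((1 : ℕ) : ℤ) - 2 := by norm_num
    rw [h0, pochC_natCast, pochC_natCast, pochC_natCast, pochC]
    rw [if_neg hneg]
    simp only [zero_add, ascPochhammer_zero, ascPochhammer_one, Polynomial.eval_one,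
      Polynomial.eval_X, Nat.factorial_zero, Nat.factorial_one]
    field_simp
    ring
  · -- p = k + 2
    have h1 : ((k + 2 : ℕ) : ℤ) - 1 = ((k + 1 : ℕ) : ℤ) := by push_cast; ring
    have h2 : ((k + 2 : ℕ) : ℤ) - 2 = ((k : ℕ) : ℤ) := by push_cast; ring
    rw [h1, h2, pochC_natCast, pochC_natCast, pochC_natCast, pochC_natCast]
    rw [show (k + 2) = (k + 1) + 1 from rfl, asc_succ_left_eval, asc_succ_left_eval]
    rw [show lam + mu + 1 + 1 = lam + mu + 2 by ring]
    rw [ascPochhammer_succ_eval]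
    set A := (ascPochhammer ℝ k).eval (lam + mu + 2) with hA
    have hf2 : ((Nat.factorial (k + 2) : ℝ)) = (k + 2) * (k + 1) * Nat.factorial k := by
      rw [Nat.factorial_succ, Nat.factorial_succ]; push_cast; ring
    have hf1 : ((Nat.factorial (k + 1) : ℝ)) = (k + 1) * Nat.factorial k := by
      rw [Nat.factorial_succ]; push_cast; ring
    rw [hf1, hf2]
    have hk : (Nat.factorial k : ℝ) ≠ 0 := by positivity
    have hk1 : ((k : ℝ) + 1) ≠ 0 := by positivity
    have hk2 : ((k : ℝ) + 2) ≠ 0 := by positivity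
    push_cast
    field_simp
    ring
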